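/- Let A be an associative algebra with derivations d, d̄ : A → Ω¹, extended entrywise to rectangular matrices over A. Suppose φ₀, g₀ ∈ Mat(m,m) solve the Miura equation (d̄g₀)·g₀⁻¹ = dφ₀; suppose P, Q ∈ Mat(n,n) solve d̄P - (dP)·P = 0 and d̄Q - Q·dQ = 0; suppose U ∈ Mat(m,n), V ∈ Mat(n,m) solve d̄U = (dU)·P + (dφ₀)·U and d̄V = Q·dV - V·dφ₀; and suppose X ∈ Mat(n,n) is invertible with X·P - Q·X = V·U and d̄X - (dX)·P + (dQ)·X + (dV)·U = 0, where QX is also invertible. Then φ := φ₀ + U·X⁻¹·V and g := (I + U·(Q·X)⁻¹·V)·g₀ solve the Miura equation (d̄g)·g⁻¹ = dφ, i.e., d̄g = (dφ)·g. -/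
import Mathlib


open MulOpposite

section Defs

variable {A Ω : Type*} [Ring A] [AddCommGroup Ω] [Module A Ω] [Module Aᵐᵒᵖ Ω]
  [SMulCommClass A Aᵐᵒᵖ Ω]

/-- Product of a matrix over `A` with a matrix over the `A`-bimodule `Ω`. -/
def lmulMat {k l n : ℕ} (M : Matrix (Fin k) (Fin l) A) (W : Matrix (Fin l) (Fin n) Ω) :
    Matrix (Fin k) (Fin n) Ω :=
  fun i j => ∑ s, M i s • W s j

/-- Product of a matrix over the `A`-bimodule `Ω` with a matrix over `A`. -/
def rmulMat {k l n : ℕ} (W : Matrix (Fin k) (Fin l) Ω) (M : Matrix (Fin l) (Fin n) A) :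
    Matrix (Fin k) (Fin n) Ω :=
  fun i j => ∑ s, op (M s j) • W i s

/-- Entrywise extension of a map `d : A → Ω` to matrices. -/
def dMat (d : A → Ω) {k l : ℕ} (M : Matrix (Fin k) (Fin l) A) : Matrix (Fin k) (Fin l) Ω :=
  fun i j => d (M i j)

end Defs

section Lemmas

variable {A Ω : Type*} [Ring A] [AddCommGroup Ω] [Module A Ω] [Module Aᵐᵒᵖ Ω]
  [SMulCommClass A Aᵐᵒᵖ Ω]

lemma lmulMat_one {k n : ℕ} (W : Matrix (Fin k) (Fin n) Ω) :
    lmulMat (1 : Matrix (Fin k) (Fin k) A) W = W := by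
  funext i j
  simp [lmulMat, Matrix.one_apply, ite_smul]

lemma rmulMat_one {k n : ℕ} (W : Matrix (Fin k) (Fin n) Ω) :
    rmulMat W (1 : Matrix (Fin n) (Fin n) A) = W := by
  funext i j
  simp [rmulMat, Matrix.one_apply, apply_ite op, ite_smul]

lemma lmulMat_lmulMat {k l r s : ℕ} (M : Matrix (Fin k) (Fin l) A)
    (N : Matrix (Fin l) (Fin r) A) (W : Matrix (Fin r) (Fin s) Ω) :
    lmulMat M (lmulMat N W) = lmulMat (M * N) W := by
  funext i j
  simp only [lmulMat, Matrix.mul_apply, Finset.smul_sum, Finset.sum_smul, mul_smul]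
  rw [Finset.sum_comm]

lemma rmulMat_rmulMat {k l r s : ℕ} (W : Matrix (Fin k) (Fin l) Ω)
    (M : Matrix (Fin l) (Fin r) A) (N : Matrix (Fin r) (Fin s) A) :
    rmulMat (rmulMat W M) N = rmulMat W (M * N) := by
  funext i j
  have hop : ∀ (f : Fin r → A), op (∑ t, f t) = ∑ t, op (f t) := fun f =>
    map_sum (opAddEquiv : A ≃+ Aᵐᵒᵖ) f Finset.univ
  simp only [rmulMat, Matrix.mul_apply, hop, op_mul, Finset.smul_sum, Finset.sum_smul,
    mul_smul]
  rw [Finset.sum_comm]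

lemma lmulMat_rmulMat {k l r s : ℕ} (M : Matrix (Fin k) (Fin l) A)
    (W : Matrix (Fin l) (Fin r) Ω) (N : Matrix (Fin r) (Fin s) A) :
    lmulMat M (rmulMat W N) = rmulMat (lmulMat M W) N := by
  funext i j
  simp only [lmulMat, rmulMat, Finset.smul_sum]
  rw [Finset.sum_comm]
  refine Finset.sum_congr rfl fun t _ => ?_
  exact Finset.sum_congr rfl fun s _ => smul_comm _ _ _

lemma lmulMat_add_left {k l r : ℕ} (M N : Matrix (Fin k) (Fin l) A)
    (W : Matrix (Fin l) (Fin r) Ω) :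
    lmulMat (M + N) W = lmulMat M W + lmulMat N W := by
  funext i j
  simp [lmulMat, add_smul, Finset.sum_add_distrib]

lemma lmulMat_add_right {k l r : ℕ} (M : Matrix (Fin k) (Fin l) A)
    (W W' : Matrix (Fin l) (Fin r) Ω) :
    lmulMat M (W + W') = lmulMat M W + lmulMat M W' := by
  funext i j
  simp [lmulMat, smul_add, Finset.sum_add_distrib]

lemma lmulMat_neg_right {k l r : ℕ} (M : Matrix (Fin k) (Fin l) A)
    (W : Matrix (Fin l) (Fin r) Ω) :
    lmulMat M (-W) = -lmulMat M W := by
  funext i j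
  simp [lmulMat]

lemma lmulMat_sub_right {k l r : ℕ} (M : Matrix (Fin k) (Fin l) A)
    (W W' : Matrix (Fin l) (Fin r) Ω) :
    lmulMat M (W - W') = lmulMat M W - lmulMat M W' := by
  funext i j
  simp [lmulMat, smul_sub, Finset.sum_sub_distrib]

lemma lmulMat_zero_right {k l r : ℕ} (M : Matrix (Fin k) (Fin l) A) :
    lmulMat M (0 : Matrix (Fin l) (Fin r) Ω) = 0 := by
  funext i j
  simp [lmulMat]

lemma rmulMat_add_left {k l r : ℕ} (W W' : Matrix (Fin k) (Fin l) Ω)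
    (M : Matrix (Fin l) (Fin r) A) :
    rmulMat (W + W') M = rmulMat W M + rmulMat W' M := by
  funext i j
  simp [rmulMat, smul_add, Finset.sum_add_distrib]

lemma rmulMat_add_right {k l r : ℕ} (W : Matrix (Fin k) (Fin l) Ω)
    (M N : Matrix (Fin l) (Fin r) A) :
    rmulMat W (M + N) = rmulMat W M + rmulMat W N := by
  funext i j
  simp [rmulMat, add_smul, Finset.sum_add_distrib]

lemma rmulMat_neg_left {k l r : ℕ} (W : Matrix (Fin k) (Fin l) Ω)
    (M : Matrix (Fin l) (Fin r) A) :
    rmulMat (-W) M = -rmulMat W M := by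
  funext i j
  simp [rmulMat]

lemma rmulMat_sub_left {k l r : ℕ} (W W' : Matrix (Fin k) (Fin l) Ω)
    (M : Matrix (Fin l) (Fin r) A) :
    rmulMat (W - W') M = rmulMat W M - rmulMat W' M := by
  funext i j
  simp [rmulMat, smul_sub, Finset.sum_sub_distrib]

lemma rmulMat_zero_left {k l r : ℕ} (M : Matrix (Fin l) (Fin r) A) :
    rmulMat (0 : Matrix (Fin k) (Fin l) Ω) M = 0 := by
  funext i j
  simp [rmulMat]

set_option linter.unusedSectionVars false

lemma d_zero' {d : A → Ω} (hd_add : ∀ a b : A, d (a + b) = d a + d b) : d 0 = 0 := by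
  have h := hd_add 0 0
  rw [add_zero] at h
  exact (left_eq_add.mp h)

lemma dMat_add {d : A → Ω} (hd_add : ∀ a b : A, d (a + b) = d a + d b) {k l : ℕ}
    (M N : Matrix (Fin k) (Fin l) A) :
    dMat d (M + N) = dMat d M + dMat d N := by
  funext i j
  simp [dMat, hd_add, Matrix.add_apply]

lemma d_one' {d : A → Ω} (hd_leib : ∀ a b : A, d (a * b) = op b • d a + a • d b) :
    d 1 = 0 := by
  have h := hd_leib 1 1
  simp only [mul_one, op_one, one_smul] at h
  exact left_eq_add.mp h

lemma dMat_one {d : A → Ω} (hd_add : ∀ a b : A, d (a + b) = d a + d b)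
    (hd_leib : ∀ a b : A, d (a * b) = op b • d a + a • d b) {k : ℕ} :
    dMat d (1 : Matrix (Fin k) (Fin k) A) = 0 := by
  funext i j
  by_cases h : i = j <;>
    simp [dMat, Matrix.one_apply, h, d_one' hd_leib, d_zero' hd_add]

lemma dMat_mul {d : A → Ω} (hd_add : ∀ a b : A, d (a + b) = d a + d b)
    (hd_leib : ∀ a b : A, d (a * b) = op b • d a + a • d b) {k l r : ℕ}
    (M : Matrix (Fin k) (Fin l) A) (N : Matrix (Fin l) (Fin r) A) :
    dMat d (M * N) = rmulMat (dMat d M) N + lmulMat M (dMat d N) := by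
  funext i j
  have hsum : ∀ (f : Fin l → A), d (∑ t, f t) = ∑ t, d (f t) :=
    fun f => map_sum (AddMonoidHom.mk' d hd_add) f Finset.univ
  simp only [dMat, Matrix.mul_apply, Matrix.add_apply, rmulMat, lmulMat, hsum, hd_leib,
    Finset.sum_add_distrib]

end Lemmas

set_option maxHeartbeats 1000000 in
/-- Binary Darboux transformation theorem in bidifferential calculus
(with `α = β = 0`): from a solution `(φ₀, g₀)` of the Miura equation `(d̄g₀)g₀⁻¹ = dφ₀`
and solutions `P, Q, U, V, X` of the stated Riemann, linear and Sylvester-type equations,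
`φ := φ₀ + U X⁻¹ V` and `g := (I + U (QX)⁻¹ V) g₀` again solve the Miura equation
`d̄g = (dφ)·g`. -/
theorem stmt_17 {A Ω : Type*} [Ring A] [AddCommGroup Ω] [Module A Ω] [Module Aᵐᵒᵖ Ω]
    [SMulCommClass A Aᵐᵒᵖ Ω]
    (d dbar : A → Ω)
    (hd_add : ∀ a b : A, d (a + b) = d a + d b)
    (hdbar_add : ∀ a b : A, dbar (a + b) = dbar a + dbar b)
    (hd_leib : ∀ a b : A, d (a * b) = op b • d a + a • d b)
    (hdbar_leib : ∀ a b : A, dbar (a * b) = op b • dbar a + a • dbar b)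
    {m n : ℕ}
    (φ₀ g₀ g₀inv : Matrix (Fin m) (Fin m) A)
    (hg₀l : g₀ * g₀inv = 1) (hg₀r : g₀inv * g₀ = 1)
    (hMiura₀ : rmulMat (dMat dbar g₀) g₀inv = dMat d φ₀)
    (P Q : Matrix (Fin n) (Fin n) A)
    (hP : dMat dbar P - rmulMat (dMat d P) P = 0)
    (hQ : dMat dbar Q - lmulMat Q (dMat d Q) = 0)
    (U : Matrix (Fin m) (Fin n) A) (V : Matrix (Fin n) (Fin m) A)
    (hU : dMat dbar U = rmulMat (dMat d U) P + rmulMat (dMat d φ₀) U)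
    (hV : dMat dbar V = lmulMat Q (dMat d V) - lmulMat V (dMat d φ₀))
    (X Xinv : Matrix (Fin n) (Fin n) A)
    (hXl : X * Xinv = 1) (hXr : Xinv * X = 1)
    (hSyl : X * P - Q * X = V * U)
    (hdX : dMat dbar X - rmulMat (dMat d X) P + rmulMat (dMat d Q) X
      + rmulMat (dMat d V) U = 0)
    (QXinv : Matrix (Fin n) (Fin n) A)
    (hQXl : Q * X * QXinv = 1) (hQXr : QXinv * (Q * X) = 1)
    (φ g : Matrix (Fin m) (Fin m) A)
    (hφ : φ = φ₀ + U * Xinv * V)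
    (hg : g = (1 + U * QXinv * V) * g₀) :
    dMat dbar g = rmulMat (dMat d φ) g := by
  subst hφ hg
  -- abbreviations for derivative rules on matrices
  have hDmul : ∀ {k l r : ℕ} (M : Matrix (Fin k) (Fin l) A) (N : Matrix (Fin l) (Fin r) A),
      dMat d (M * N) = rmulMat (dMat d M) N + lmulMat M (dMat d N) :=
    fun M N => dMat_mul hd_add hd_leib M N
  have hDbmul : ∀ {k l r : ℕ} (M : Matrix (Fin k) (Fin l) A) (N : Matrix (Fin l) (Fin r) A),
      dMat dbar (M * N) = rmulMat (dMat dbar M) N + lmulMat M (dMat dbar N) :=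
    fun M N => dMat_mul hdbar_add hdbar_leib M N
  -- algebraic identities
  have hKQ : QXinv * Q = Xinv := by
    have : QXinv * Q = QXinv * Q * (X * Xinv) := by rw [hXl, mul_one]
    rw [this, ← mul_assoc, mul_assoc QXinv Q X, hQXr, one_mul]
  have hXr' : ∀ {k : ℕ} (Z : Matrix (Fin n) (Fin k) A), Xinv * (X * Z) = Z := by
    intro k Z; rw [← Matrix.mul_assoc, hXr, Matrix.one_mul]
  have hQXl' : ∀ {k : ℕ} (Z : Matrix (Fin n) (Fin k) A), Q * (X * (QXinv * Z)) = Z := by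
    intro k Z; rw [← Matrix.mul_assoc, ← Matrix.mul_assoc, hQXl, Matrix.one_mul]
  have hKey : P * (QXinv * (V * g₀)) =
      Xinv * (V * g₀) + Xinv * (V * (U * (QXinv * (V * g₀)))) := by
    have h1 : V * (U * (QXinv * (V * g₀))) = (X * P - Q * X) * (QXinv * (V * g₀)) := by
      rw [← Matrix.mul_assoc, hSyl]
    rw [h1, Matrix.sub_mul, Matrix.mul_sub, Matrix.mul_assoc X P, hXr', Matrix.mul_assoc Q X, hQXl']
    abel
  -- solved forms of the hypotheses
  have hdg0 : dMat dbar g₀ = rmulMat (dMat d φ₀) g₀ := by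
    calc dMat dbar g₀ = rmulMat (dMat dbar g₀) 1 := (rmulMat_one _).symm
      _ = rmulMat (dMat dbar g₀) (g₀inv * g₀) := by rw [hg₀r]
      _ = rmulMat (rmulMat (dMat dbar g₀) g₀inv) g₀ := (rmulMat_rmulMat _ _ _).symm
      _ = rmulMat (dMat d φ₀) g₀ := by rw [hMiura₀]
  have hQ' : dMat dbar Q = lmulMat Q (dMat d Q) := sub_eq_zero.mp hQ
  have hdX' : dMat dbar X = rmulMat (dMat d X) P - rmulMat (dMat d Q) X
      - rmulMat (dMat d V) U := by
    have h : dMat dbar X - (rmulMat (dMat d X) P - rmulMat (dMat d Q) X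
        - rmulMat (dMat d V) U) = 0 := by rw [← hdX]; abel
    exact sub_eq_zero.mp h
  have hdQX : dMat dbar (Q * X) = rmulMat (lmulMat Q (dMat d X)) P
      - rmulMat (lmulMat Q (dMat d V)) U := by
    rw [hDbmul, hQ', hdX', lmulMat_sub_right, lmulMat_sub_right,
      lmulMat_rmulMat, lmulMat_rmulMat, lmulMat_rmulMat]
    abel
  have hdY : dMat d Xinv = - rmulMat (lmulMat Xinv (dMat d X)) Xinv := by
    have h0 : rmulMat (dMat d X) Xinv + lmulMat X (dMat d Xinv) = 0 := by
      rw [← hDmul, hXl, dMat_one hd_add hd_leib]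
    have h1 : lmulMat X (dMat d Xinv) = - rmulMat (dMat d X) Xinv :=
      eq_neg_of_add_eq_zero_right h0
    calc dMat d Xinv = lmulMat (Xinv * X) (dMat d Xinv) := by rw [hXr, lmulMat_one]
      _ = lmulMat Xinv (lmulMat X (dMat d Xinv)) := (lmulMat_lmulMat _ _ _).symm
      _ = lmulMat Xinv (- rmulMat (dMat d X) Xinv) := by rw [h1]
      _ = - rmulMat (lmulMat Xinv (dMat d X)) Xinv := by
          rw [lmulMat_neg_right, lmulMat_rmulMat]
  have hdK : dMat dbar QXinv = - rmulMat (rmulMat (lmulMat Xinv (dMat d X)) P) QXinv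
      + rmulMat (rmulMat (lmulMat Xinv (dMat d V)) U) QXinv := by
    have h0 : rmulMat (dMat dbar (Q * X)) QXinv + lmulMat (Q * X) (dMat dbar QXinv) = 0 := by
      rw [← hDbmul, hQXl, dMat_one hdbar_add hdbar_leib]
    have h1 : lmulMat (Q * X) (dMat dbar QXinv) = - rmulMat (dMat dbar (Q * X)) QXinv :=
      eq_neg_of_add_eq_zero_right h0
    calc dMat dbar QXinv = lmulMat (QXinv * (Q * X)) (dMat dbar QXinv) := by
          rw [hQXr, lmulMat_one]
      _ = lmulMat QXinv (lmulMat (Q * X) (dMat dbar QXinv)) := (lmulMat_lmulMat _ _ _).symm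
      _ = lmulMat QXinv (- rmulMat (dMat dbar (Q * X)) QXinv) := by rw [h1]
      _ = - rmulMat (lmulMat QXinv (dMat dbar (Q * X))) QXinv := by
          rw [lmulMat_neg_right, lmulMat_rmulMat]
      _ = _ := by
          rw [hdQX, lmulMat_sub_right, lmulMat_rmulMat, lmulMat_rmulMat,
            lmulMat_lmulMat, lmulMat_lmulMat, hKQ, rmulMat_sub_left]
          abel
  -- main computation
  simp only [hDbmul, hDmul, dMat_add hdbar_add, dMat_add hd_add,
    dMat_one hdbar_add hdbar_leib, dMat_one hd_add hd_leib,
    hU, hV, hdg0, hdK, hdY,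
    lmulMat_lmulMat, rmulMat_rmulMat, lmulMat_rmulMat,
    lmulMat_one, rmulMat_one,
    lmulMat_add_left, lmulMat_add_right, lmulMat_sub_right, lmulMat_neg_right,
    lmulMat_zero_right,
    rmulMat_add_left, rmulMat_add_right, rmulMat_sub_left, rmulMat_neg_left,
    rmulMat_zero_left,
    Matrix.add_mul, Matrix.mul_add, Matrix.one_mul, Matrix.mul_one, Matrix.mul_assoc, hKQ,
    zero_add, add_zero]
  rw [hKey]
  simp only [rmulMat_add_right, rmulMat_sub_left, rmulMat_neg_left, rmulMat_add_left]
  abel
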